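/- Let u, φ : ℝ → ℝ be smooth functions satisfying φ − φ″ = (3u² − (u′)²)/2 − u u″, and set m = u − u″. Then φ‴ − φ′ = −u m′ − 2u′ m. (That is, applying the second Hamiltonian operator B₂ = D_x³ − D_x of the Camassa–Holm equation to the variational derivative φ = δH₂/δm, characterized by (1 − D_x²)φ = δH₂/δu, yields the Camassa–Holm right-hand side −u m_x − 2u_x m; this avoids any use of the inverse operator (1 − D_x²)⁻¹.) -/

import Mathlib

/-- Applying the second Hamiltonian operator `B₂ = D_x³ − D_x` of the
Camassa–Holm equation to the variational derivative `φ = δH₂/δm`, characterized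
by `(1 − D_x²)φ = (3u² − u_x²)/2 − u u_xx`, yields the Camassa–Holm right-hand
side `−u m_x − 2 u_x m` with `m = u − u_xx`. -/
theorem camassa_holm_B2_on_variational_derivative
    (u φ : ℝ → ℝ)
    (hu : ContDiff ℝ (⊤ : ℕ∞) u) (hφ : ContDiff ℝ (⊤ : ℕ∞) φ)
    (hφeq : ∀ x : ℝ, φ x - deriv (deriv φ) x
      = (3 * u x ^ 2 - (deriv u x) ^ 2) / 2 - u x * deriv (deriv u) x)
    (m : ℝ → ℝ)
    (hm : m = fun x => u x - deriv (deriv u) x) :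
    ∀ x : ℝ, deriv (deriv (deriv φ)) x - deriv φ x
      = -(u x) * deriv m x - 2 * deriv u x * m x := by
  have hu1 : ContDiff ℝ (⊤ : ℕ∞) (deriv u) := (contDiff_infty_iff_deriv.mp hu).2
  have hu2 : ContDiff ℝ (⊤ : ℕ∞) (deriv (deriv u)) :=
    (contDiff_infty_iff_deriv.mp hu1).2
  have hφ1 : ContDiff ℝ (⊤ : ℕ∞) (deriv φ) := (contDiff_infty_iff_deriv.mp hφ).2
  have hφ2 : ContDiff ℝ (⊤ : ℕ∞) (deriv (deriv φ)) :=
    (contDiff_infty_iff_deriv.mp hφ1).2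
  have du : ∀ x, HasDerivAt u (deriv u x) x := fun x =>
    (hu.differentiable (by simp) x).hasDerivAt
  have du1 : ∀ x, HasDerivAt (deriv u) (deriv (deriv u) x) x := fun x =>
    (hu1.differentiable (by simp) x).hasDerivAt
  have du2 : ∀ x, HasDerivAt (deriv (deriv u)) (deriv (deriv (deriv u)) x) x := fun x =>
    (hu2.differentiable (by simp) x).hasDerivAt
  have dφ : ∀ x, HasDerivAt φ (deriv φ x) x := fun x =>
    (hφ.differentiable (by simp) x).hasDerivAt
  have dφ2 : ∀ x, HasDerivAt (deriv (deriv φ)) (deriv (deriv (deriv φ)) x) x := fun x =>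
    (hφ2.differentiable (by simp) x).hasDerivAt
  intro x
  -- derivative of LHS of hφeq
  have hL : HasDerivAt (fun x => φ x - deriv (deriv φ) x)
      (deriv φ x - deriv (deriv (deriv φ)) x) x := (dφ x).sub (dφ2 x)
  have hR : HasDerivAt (fun x => (3 * u x ^ 2 - (deriv u x) ^ 2) / 2
        - u x * deriv (deriv u) x)
      ((3 * (2 * u x * deriv u x) - 2 * deriv u x * deriv (deriv u) x) / 2
        - (deriv u x * deriv (deriv u) x + u x * deriv (deriv (deriv u)) x)) x := by
    have h1 : HasDerivAt (fun x => u x ^ 2) (2 * u x * deriv u x) x := by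
      simpa [mul_comm, mul_assoc, pow_two] using (du x).fun_pow 2
    have h2 : HasDerivAt (fun x => (deriv u x) ^ 2)
        (2 * deriv u x * deriv (deriv u) x) x := by
      simpa [mul_comm, mul_assoc, pow_two] using (du1 x).fun_pow 2
    exact (((h1.const_mul 3).sub h2).div_const 2).sub ((du x).mul (du2 x))
  have heq : (fun x => φ x - deriv (deriv φ) x)
      = fun x => (3 * u x ^ 2 - (deriv u x) ^ 2) / 2 - u x * deriv (deriv u) x :=
    funext hφeq
  have key : deriv φ x - deriv (deriv (deriv φ)) x
      = (3 * (2 * u x * deriv u x) - 2 * deriv u x * deriv (deriv u) x) / 2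
        - (deriv u x * deriv (deriv u) x + u x * deriv (deriv (deriv u)) x) := by
    rw [← hL.deriv, heq, hR.deriv]
  have hdm : deriv m x = deriv u x - deriv (deriv (deriv u)) x := by
    rw [hm]; exact ((du x).sub (du2 x)).deriv
  rw [hdm, hm]
  ring_nf at key ⊢
  linarith [key]
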